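/- arXiv:2410.15493 — 2 statements merged into one kernel-verified Lean document; each statement's English description precedes it below -/
import Mathlib

section
/- Equip ℝ × ℝ² with the parabolic norm ‖(t,x)‖_𝔰 := |t|^{1/2} + |x|, and for z = (z₀, z') ∈ ℝ × ℝ², λ ∈ (0,1], and φ : ℝ × ℝ² → ℝ define the rescaled test function φ_z^λ(s,y) := λ^{−4} φ(λ^{−2}(s − z₀), λ^{−1}(y − z')). Let a ∈ (−4, 0]. Then there exists a constant C > 0 (depending only on a) such that for every λ ∈ (0,1], every z ∈ ℝ × ℝ², every measurable f : ℝ × ℝ² → ℝ with |f(w)| ≤ ‖w − z‖_𝔰^a for all w ≠ z, and every measurable φ with |φ| ≤ 1 vanishing outside the set {w : ‖w‖_𝔰 ≤ 1}, one has |∫_{ℝ×ℝ²} f(w) φ_z^λ(w) dw| ≤ C λ^a. -/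
open MeasureTheory

/-- The parabolic norm `‖(t,x)‖_𝔰 = |t|^{1/2} + |x|` on `ℝ × ℝ²`. -/
noncomputable def parabolicNorm (z : ℝ × EuclideanSpace ℝ (Fin 2)) : ℝ :=
  |z.1| ^ ((1 : ℝ)/2) + ‖z.2‖

/-- The parabolically rescaled and recentered test function
`φ_z^λ(s,y) = λ^{−4} φ(λ^{−2}(s − z₀), λ^{−1}(y − z'))`. -/
noncomputable def scaledTest (lam : ℝ) (z : ℝ × EuclideanSpace ℝ (Fin 2))
    (φ : ℝ × EuclideanSpace ℝ (Fin 2) → ℝ) (w : ℝ × EuclideanSpace ℝ (Fin 2)) : ℝ :=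
  lam ^ (-4 : ℤ) * φ (lam ^ (-2 : ℤ) * (w.1 - z.1), (lam ^ (-1 : ℤ)) • (w.2 - z.2))

section Aux

open Set

/-! ### Auxiliary definitions and lemmas -/

/-- The 1D cutoff power profile `t ↦ |t|^r 1_{|t| ≤ b}`. -/
noncomputable def g1 (r b t : ℝ) : ℝ := Set.indicator (Set.Icc 0 b) (fun y => y ^ r) |t|

lemma g1_nonneg (r b t : ℝ) : 0 ≤ g1 r b t := by
  unfold g1
  by_cases h : |t| ∈ Set.Icc 0 b
  · rw [Set.indicator_of_mem h]; positivity
  · rw [Set.indicator_of_notMem h]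

lemma g1_eval {r b t : ℝ} (h : |t| ≤ b) : g1 r b t = |t| ^ r :=
  Set.indicator_of_mem (Set.mem_Icc.mpr ⟨abs_nonneg t, h⟩) _

lemma g1_eq_indicator (r b : ℝ) :
    g1 r b = Set.indicator (Set.Icc (-b) b) (fun t => |t| ^ r) := by
  funext t
  by_cases h : |t| ≤ b
  · rw [g1_eval h, Set.indicator_of_mem (Set.mem_Icc.mpr (abs_le.mp h))]
  · rw [Set.indicator_of_notMem (by rwa [Set.mem_Icc, ← abs_le]),
      g1, Set.indicator_of_notMem (by simp [Set.mem_Icc, h])]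

lemma g1_integrable {r : ℝ} (hr : -1 < r) {b : ℝ} (hb : 0 < b) : Integrable (g1 r b) := by
  rw [g1_eq_indicator, integrable_indicator_iff measurableSet_Icc,
    ← intervalIntegrable_iff_integrableOn_Icc_of_le (by linarith)]
  have h1 : IntervalIntegrable (fun t : ℝ => |t| ^ r) volume 0 b := by
    rw [intervalIntegrable_iff_integrableOn_Icc_of_le hb.le]
    exact ((intervalIntegrable_iff_integrableOn_Icc_of_le hb.le).mp
      (intervalIntegral.intervalIntegrable_rpow' hr)).congr_fun
      (fun x hx => by rw [abs_of_nonneg hx.1]) measurableSet_Icc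
  have h2 : IntervalIntegrable (fun t : ℝ => |t| ^ r) volume (-b) 0 := by
    have := (IntervalIntegrable.iff_comp_neg).mp h1
    simp only [abs_neg, neg_zero] at this
    exact this.symm
  exact h2.trans h1

lemma g1_integral {r : ℝ} (hr : -1 < r) {b : ℝ} (hb : 0 < b) :
    ∫ t, g1 r b t = 2 * (b ^ (r + 1) / (r + 1)) := by
  unfold g1
  rw [integral_comp_abs (f := fun y => Set.indicator (Set.Icc 0 b) (fun y => y ^ r) y),
    setIntegral_indicator measurableSet_Icc]
  have hs : Set.Ioi (0:ℝ) ∩ Set.Icc 0 b = Set.Ioc 0 b := by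
    ext x
    simp only [Set.mem_inter_iff, Set.mem_Ioi, Set.mem_Icc, Set.mem_Ioc]
    exact ⟨fun ⟨h1, _, h3⟩ => ⟨h1, h3⟩, fun ⟨h1, h2⟩ => ⟨h1, h1.le, h2⟩⟩
  rw [hs, ← intervalIntegral.integral_of_le hb.le,
    integral_rpow (Or.inl hr), Real.zero_rpow (by linarith), sub_zero]

/-- Euclidean plane abbreviation. -/
abbrev E2 := EuclideanSpace ℝ (Fin 2)

/-- The 2D cutoff power profile, as a product of coordinate profiles. -/
noncomputable def c2 (r b : ℝ) (x : E2) : ℝ := g1 r b (x 0) * g1 r b (x 1)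

lemma c2_nonneg (r b : ℝ) (x : E2) : 0 ≤ c2 r b x :=
  mul_nonneg (g1_nonneg _ _ _) (g1_nonneg _ _ _)

lemma e2_comp : ∀ x : E2, (MeasurableEquiv.finTwoArrow (α := ℝ))
    (((MeasurableEquiv.toLp 2 (Fin 2 → ℝ)).symm) x) = (x 0, x 1) := fun x => by
  simp [MeasurableEquiv.finTwoArrow]

noncomputable def mpE2 : MeasurePreserving
    (fun x : E2 => ((MeasurableEquiv.finTwoArrow (α := ℝ))
      (((MeasurableEquiv.toLp 2 (Fin 2 → ℝ)).symm) x))) volume volume :=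
  (volume_preserving_finTwoArrow ℝ).comp (EuclideanSpace.volume_preserving_symm_measurableEquiv_toLp (Fin 2))

lemma embE2 : MeasurableEmbedding (fun x : E2 => ((MeasurableEquiv.finTwoArrow (α := ℝ))
      (((MeasurableEquiv.toLp 2 (Fin 2 → ℝ)).symm) x)) ) :=
  (((MeasurableEquiv.toLp 2 (Fin 2 → ℝ)).symm).trans MeasurableEquiv.finTwoArrow).measurableEmbedding

lemma c2_integrable {r : ℝ} {b : ℝ} (h1 : Integrable (g1 r b)) : Integrable (c2 r b) := by
  have h2 : Integrable (fun p : ℝ × ℝ => g1 r b p.1 * g1 r b p.2) := by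
    rw [show (volume : Measure (ℝ × ℝ)) = Measure.prod volume volume from rfl] at *
    exact h1.mul_prod h1
  have := (mpE2.integrable_comp_emb embE2).mpr h2
  refine this.congr (Filter.Eventually.of_forall fun x => ?_)
  simp only [Function.comp_apply, e2_comp]
  rfl

lemma c2_integral (r b : ℝ) :
    ∫ x : E2, c2 r b x = (∫ t, g1 r b t) * (∫ t, g1 r b t) := by
  have key := mpE2.integral_comp embE2 (fun p : ℝ × ℝ => g1 r b p.1 * g1 r b p.2)
  have h : ∫ x : E2, c2 r b x
      = ∫ x : E2, (fun p : ℝ × ℝ => g1 r b p.1 * g1 r b p.2)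
          ((MeasurableEquiv.finTwoArrow (α := ℝ)) (((MeasurableEquiv.toLp 2 (Fin 2 → ℝ)).symm) x)) := by
    congr 1
  rw [h, key, show (volume : Measure (ℝ × ℝ)) = Measure.prod volume volume from rfl,
    integral_prod_mul]

lemma norm_E2_eq (v : E2) : ‖v‖ = Real.sqrt (|v 0|^2 + |v 1|^2) := by
  rw [EuclideanSpace.norm_eq, Fin.sum_univ_two]
  simp [Real.norm_eq_abs]

lemma coord0_le_norm (v : E2) : |v 0| ≤ ‖v‖ := by
  rw [norm_E2_eq]
  exact (Real.le_sqrt (abs_nonneg _) (by positivity)).mpr (by nlinarith [sq_nonneg (|v 1|)])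

lemma coord1_le_norm (v : E2) : |v 1| ≤ ‖v‖ := by
  rw [norm_E2_eq]
  exact (Real.le_sqrt (abs_nonneg _) (by positivity)).mpr (by nlinarith [sq_nonneg (|v 0|)])

lemma sqrt_mul_le_norm (v : E2) : (|v 0| * |v 1|) ^ ((1:ℝ)/2) ≤ ‖v‖ := by
  rw [norm_E2_eq, ← Real.sqrt_eq_rpow]
  apply Real.sqrt_le_sqrt
  nlinarith [sq_nonneg (|v 0| - |v 1|), abs_nonneg (v 0), abs_nonneg (v 1)]

lemma para_bound {a : ℝ} (ha0 : a ≤ 0) {u : ℝ} (hu : u ≠ 0) {v : E2}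
    (hv0 : v 0 ≠ 0) (hv1 : v 1 ≠ 0) :
    parabolicNorm (u, v) ^ a ≤ |u| ^ (a/4) * (|v 0| ^ (a/4) * |v 1| ^ (a/4)) := by
  have hu0 : (0:ℝ) < |u| := abs_pos.mpr hu
  have hv0' : (0:ℝ) < |v 0| := abs_pos.mpr hv0
  have hv1' : (0:ℝ) < |v 1| := abs_pos.mpr hv1
  set s : ℝ := |u| ^ ((1:ℝ)/2) with hs_def
  have hs : 0 < s := Real.rpow_pos_of_pos hu0 _
  have hρ : 0 < ‖v‖ := lt_of_lt_of_le hv0' (coord0_le_norm v)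
  have hP : parabolicNorm (u, v) = s + ‖v‖ := rfl
  have hsr : (s * ‖v‖) ^ ((1:ℝ)/2) ≤ s + ‖v‖ := by
    rw [← Real.sqrt_eq_rpow]
    calc Real.sqrt (s * ‖v‖) ≤ Real.sqrt ((s + ‖v‖)^2) := by
          apply Real.sqrt_le_sqrt; nlinarith
      _ = s + ‖v‖ := Real.sqrt_sq (by positivity)
  have step1 : parabolicNorm (u, v) ^ a ≤ ((s * ‖v‖) ^ ((1:ℝ)/2)) ^ a := by
    rw [hP]
    exact Real.rpow_le_rpow_of_nonpos (Real.rpow_pos_of_pos (by positivity) _) hsr ha0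
  have step2 : ((s * ‖v‖) ^ ((1:ℝ)/2)) ^ a = s ^ (a/2) * ‖v‖ ^ (a/2) := by
    rw [← Real.rpow_mul (by positivity), Real.mul_rpow hs.le hρ.le,
      show (1:ℝ)/2 * a = a/2 by ring]
  have hs4 : s ^ (a/2) = |u| ^ (a/4) := by
    rw [hs_def, ← Real.rpow_mul (abs_nonneg u), show (1:ℝ)/2 * (a/2) = a/4 by ring]
  have step3 : ‖v‖ ^ (a/2) ≤ |v 0| ^ (a/4) * |v 1| ^ (a/4) := by
    have h1 : ((|v 0| * |v 1|) ^ ((1:ℝ)/2)) ^ (a/2) = |v 0| ^ (a/4) * |v 1| ^ (a/4) := by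
      rw [← Real.rpow_mul (by positivity), show (1:ℝ)/2 * (a/2) = a/4 by ring,
        Real.mul_rpow hv0'.le hv1'.le]
    rw [← h1]
    exact Real.rpow_le_rpow_of_nonpos (Real.rpow_pos_of_pos (by positivity) _)
      (sqrt_mul_le_norm v) (by linarith)
  calc parabolicNorm (u, v) ^ a ≤ s ^ (a/2) * ‖v‖ ^ (a/2) := by rw [← step2]; exact step1
    _ ≤ |u| ^ (a/4) * (|v 0| ^ (a/4) * |v 1| ^ (a/4)) := by
        rw [hs4]
        exact mul_le_mul_of_nonneg_left step3 (by positivity)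

lemma support_bound {lam : ℝ} (hlam : 0 < lam) {u : ℝ} {v : E2}
    (h : parabolicNorm (lam ^ (-2:ℤ) * u, (lam ^ (-1:ℤ) : ℝ) • v) ≤ 1) :
    |u| ≤ lam ^ 2 ∧ ‖v‖ ≤ lam := by
  have h1 : |lam ^ (-2:ℤ) * u| ^ ((1:ℝ)/2) + ‖(lam ^ (-1:ℤ) : ℝ) • v‖ ≤ 1 := h
  have ht : |lam ^ (-2:ℤ) * u| ^ ((1:ℝ)/2) ≤ 1 := by
    have := norm_nonneg ((lam ^ (-1:ℤ) : ℝ) • v); linarith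
  have hx : ‖(lam ^ (-1:ℤ) : ℝ) • v‖ ≤ 1 := by
    have : (0:ℝ) ≤ |lam ^ (-2:ℤ) * u| ^ ((1:ℝ)/2) := Real.rpow_nonneg (abs_nonneg _) _
    linarith
  have hinv2 : lam ^ (-2:ℤ) = (lam ^ 2)⁻¹ := by
    rw [zpow_neg, zpow_two, pow_two]
  have hinv1 : (lam ^ (-1:ℤ) : ℝ) = lam⁻¹ := zpow_neg_one lam
  constructor
  · have h2 : |lam ^ (-2:ℤ) * u| ≤ 1 := by
      by_contra hcon
      push_neg at hcon
      have h3 : 1 < |lam ^ (-2:ℤ) * u| ^ ((1:ℝ)/2) :=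
        (Real.one_lt_rpow_iff_of_pos (lt_trans one_pos hcon)).mpr
          (Or.inl ⟨hcon, by norm_num⟩)
      linarith
    rw [abs_mul, abs_of_pos (zpow_pos hlam _), hinv2] at h2
    calc |u| = lam ^ 2 * ((lam ^ 2)⁻¹ * |u|) := by field_simp
      _ ≤ lam ^ 2 * 1 := mul_le_mul_of_nonneg_left h2 (by positivity)
      _ = lam ^ 2 := mul_one _
  · rw [norm_smul, Real.norm_eq_abs, abs_of_pos (zpow_pos hlam _), hinv1] at hx
    calc ‖v‖ = lam * (lam⁻¹ * ‖v‖) := by field_simp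
      _ ≤ lam * 1 := mul_le_mul_of_nonneg_left hx hlam.le
      _ = lam := mul_one _

lemma null_t (c : ℝ) : volume {w : ℝ × E2 | w.1 = c} = 0 := by
  have h : {w : ℝ × E2 | w.1 = c} = {c} ×ˢ univ := by ext w; rw [Set.mem_prod]; simp
  rw [h, show (volume : Measure (ℝ × E2)) = Measure.prod volume volume from rfl,
    Measure.prod_prod]
  simp

lemma null_coord (i : Fin 2) (c : ℝ) : volume {x : E2 | x i = c} = 0 := by
  have : i = 0 ∨ i = 1 := by omega
  rcases this with h' | h' <;> subst h'
  · have h : {x : E2 | x 0 = c} = (fun x : E2 => (MeasurableEquiv.finTwoArrow (α := ℝ))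
        (((MeasurableEquiv.toLp 2 (Fin 2 → ℝ)).symm) x)) ⁻¹' ({c} ×ˢ univ) := by
      ext x; simp [e2_comp, eq_comm]
    rw [h, mpE2.measure_preimage
        (((measurableSet_singleton c).prod MeasurableSet.univ).nullMeasurableSet),
      show (volume : Measure (ℝ × ℝ)) = Measure.prod volume volume from rfl, Measure.prod_prod]
    simp
  · have h : {x : E2 | x 1 = c} = (fun x : E2 => (MeasurableEquiv.finTwoArrow (α := ℝ))
        (((MeasurableEquiv.toLp 2 (Fin 2 → ℝ)).symm) x)) ⁻¹' (univ ×ˢ {c}) := by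
      ext x; simp [e2_comp, eq_comm]
    rw [h, mpE2.measure_preimage
        ((MeasurableSet.univ.prod (measurableSet_singleton c)).nullMeasurableSet),
      show (volume : Measure (ℝ × ℝ)) = Measure.prod volume volume from rfl, Measure.prod_prod]
    simp

lemma null_x (i : Fin 2) (c : ℝ) : volume {w : ℝ × E2 | w.2 i = c} = 0 := by
  have h : {w : ℝ × E2 | w.2 i = c} = univ ×ˢ {x : E2 | x i = c} := by
    ext w; rw [Set.mem_prod]; simp
  rw [h, show (volume : Measure (ℝ × E2)) = Measure.prod volume volume from rfl,
    Measure.prod_prod, null_coord]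
  simp

end Aux

/-- Pairing a parabolically singular function of order `a ∈ (−4, 0]` against a scaled test
function: there is `C > 0` (depending only on `a`) such that for all `λ ∈ (0,1]`,
all base points `z`, all measurable `f` with `|f(w)| ≤ ‖w − z‖_𝔰^a` for `w ≠ z`, and all
measurable `φ` bounded by `1` and vanishing outside the parabolic unit ball,
`|∫ f(w) φ_z^λ(w) dw| ≤ C λ^a`. -/
theorem singular_pairing_estimate (a : ℝ) (ha : a ∈ Set.Ioc (-4 : ℝ) 0) :
    ∃ C : ℝ, 0 < C ∧ ∀ lam ∈ Set.Ioc (0 : ℝ) 1, ∀ z : ℝ × EuclideanSpace ℝ (Fin 2),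
      ∀ f : ℝ × EuclideanSpace ℝ (Fin 2) → ℝ, Measurable f →
      (∀ w : ℝ × EuclideanSpace ℝ (Fin 2), w ≠ z → |f w| ≤ parabolicNorm (w - z) ^ a) →
      ∀ φ : ℝ × EuclideanSpace ℝ (Fin 2) → ℝ, Measurable φ →
      (∀ w, |φ w| ≤ 1) → (∀ w, 1 < parabolicNorm w → φ w = 0) →
      |∫ w : ℝ × EuclideanSpace ℝ (Fin 2), f w * scaledTest lam z φ w| ≤ C * lam ^ a := by
  obtain ⟨ha4, ha0⟩ := ha
  set q : ℝ := a/4 + 1 with hq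
  have hq0 : 0 < q := by rw [hq]; linarith
  refine ⟨8 / q^3, by positivity, ?_⟩
  rintro lam ⟨hlam0, hlam1⟩ z f hf hfb φ hφm hφb hφ0
  have hr : (-1 : ℝ) < a/4 := by linarith
  have hb2 : (0:ℝ) < lam^2 := by positivity
  have hg1 : Integrable (g1 (a/4) (lam^2)) := g1_integrable hr hb2
  have hg1' : Integrable (g1 (a/4) lam) := g1_integrable hr hlam0
  have hc2 : Integrable (c2 (a/4) lam) := c2_integrable hg1'
  set G : ℝ × E2 → ℝ := fun w =>
    lam ^ (-4:ℤ) * (g1 (a/4) (lam^2) (w.1 - z.1) * c2 (a/4) lam (w.2 - z.2)) with hG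
  have hGint : Integrable G := by
    apply Integrable.const_mul
    rw [show (volume : Measure (ℝ × E2)) = Measure.prod volume volume from rfl]
    exact (hg1.comp_sub_right z.1).mul_prod (hc2.comp_sub_right z.2)
  have hae : ∀ᵐ w : ℝ × E2, ‖f w * scaledTest lam z φ w‖ ≤ G w := by
    have h1 : ∀ᵐ w : ℝ × E2, ¬ (w.1 = z.1) := by
      rw [ae_iff]; simp only [not_not]; exact null_t z.1
    have h2 : ∀ᵐ w : ℝ × E2, ¬ (w.2 0 = z.2 0) := by
      rw [ae_iff]; simp only [not_not]; exact null_x 0 (z.2 0)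
    have h3 : ∀ᵐ w : ℝ × E2, ¬ (w.2 1 = z.2 1) := by
      rw [ae_iff]; simp only [not_not]; exact null_x 1 (z.2 1)
    filter_upwards [h1, h2, h3] with w hw1 hw2 hw3
    have hu : w.1 - z.1 ≠ 0 := sub_ne_zero.mpr hw1
    have hv0 : (w.2 - z.2) 0 ≠ 0 := sub_ne_zero.mpr hw2
    have hv1 : (w.2 - z.2) 1 ≠ 0 := sub_ne_zero.mpr hw3
    rw [Real.norm_eq_abs]
    by_cases hφz : φ (lam ^ (-2:ℤ) * (w.1 - z.1), (lam ^ (-1:ℤ) : ℝ) • (w.2 - z.2)) = 0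
    · rw [show scaledTest lam z φ w = 0 by rw [scaledTest, hφz, mul_zero], mul_zero, abs_zero]
      exact mul_nonneg (le_of_lt (zpow_pos hlam0 _))
        (mul_nonneg (g1_nonneg _ _ _) (c2_nonneg _ _ _))
    · have hp : parabolicNorm (lam ^ (-2:ℤ) * (w.1 - z.1),
          (lam ^ (-1:ℤ) : ℝ) • (w.2 - z.2)) ≤ 1 :=
        le_of_not_gt (fun hgt => hφz (hφ0 _ hgt))
      obtain ⟨hu2, hv2⟩ := support_bound hlam0 hp
      have hwz : w ≠ z := fun h => hw1 (by rw [h])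
      have hfw : |f w| ≤ parabolicNorm (w.1 - z.1, w.2 - z.2) ^ a := hfb w hwz
      have hbd : |f w| ≤ g1 (a/4) (lam^2) (w.1 - z.1) * c2 (a/4) lam (w.2 - z.2) := by
        rw [g1_eval hu2, c2, g1_eval ((coord0_le_norm _).trans hv2),
          g1_eval ((coord1_le_norm _).trans hv2)]
        exact hfw.trans (para_bound ha0 hu hv0 hv1)
      have hsT : |scaledTest lam z φ w| ≤ lam ^ (-4:ℤ) := by
        rw [scaledTest, abs_mul, abs_of_pos (zpow_pos hlam0 _)]
        calc lam ^ (-4:ℤ) * |φ _| ≤ lam ^ (-4:ℤ) * 1 :=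
              mul_le_mul_of_nonneg_left (hφb _) (le_of_lt (zpow_pos hlam0 _))
          _ = lam ^ (-4:ℤ) := mul_one _
      calc |f w * scaledTest lam z φ w| = |f w| * |scaledTest lam z φ w| := abs_mul _ _
        _ ≤ (g1 (a/4) (lam^2) (w.1 - z.1) * c2 (a/4) lam (w.2 - z.2)) * lam ^ (-4:ℤ) :=
            mul_le_mul hbd hsT (abs_nonneg _)
              (mul_nonneg (g1_nonneg _ _ _) (c2_nonneg _ _ _))
        _ = G w := by rw [hG]; ring
  have hval : ∫ w : ℝ × E2, G w = 8 / q^3 * lam ^ a := by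
    have hsplit : ∫ w : ℝ × E2, G w = lam ^ (-4:ℤ) *
        ((∫ t : ℝ, g1 (a/4) (lam^2) (t - z.1)) * (∫ x : E2, c2 (a/4) lam (x - z.2))) := by
      rw [hG, integral_const_mul,
        show (volume : Measure (ℝ × E2)) = Measure.prod volume volume from rfl,
        integral_prod_mul (fun t : ℝ => g1 (a/4) (lam^2) (t - z.1))
          (fun x : E2 => c2 (a/4) lam (x - z.2))]
    rw [hsplit, integral_sub_right_eq_self (g1 (a/4) (lam^2)) z.1,
      integral_sub_right_eq_self (c2 (a/4) lam) z.2,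
      g1_integral hr hb2, c2_integral, g1_integral hr hlam0]
    have hzp : (lam : ℝ) ^ (-4:ℤ) = lam ^ ((-4):ℝ) := by
      rw [← Real.rpow_intCast lam (-4)]; norm_num
    have h2q : ((lam^2 : ℝ)) ^ (a/4 + 1) = lam ^ (2*q) := by
      rw [show (lam^2 : ℝ) = lam ^ ((2:ℕ):ℝ) from (Real.rpow_natCast lam 2).symm,
        ← Real.rpow_mul hlam0.le]
      try congr 1
      try push_cast
      try ring
    have hcomb : lam ^ ((-4):ℝ) * (lam ^ (2*q) * (lam ^ q * lam ^ q)) = lam ^ a := by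
      rw [← Real.rpow_add hlam0, ← Real.rpow_add hlam0, ← Real.rpow_add hlam0]
      congr 1
      rw [hq]; ring
    rw [hzp, h2q, ← hq]
    rw [show lam ^ ((-4):ℝ) * (2 * (lam ^ (2*q) / q) * (2 * (lam ^ q / q) * (2 * (lam ^ q / q)))) =
      8 / q^3 * (lam ^ ((-4):ℝ) * (lam ^ (2*q) * (lam ^ q * lam ^ q))) from by
        field_simp; ring, hcomb]
  calc |∫ w : ℝ × E2, f w * scaledTest lam z φ w| ≤ ∫ w : ℝ × E2, G w := by
        rw [← Real.norm_eq_abs]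
        exact norm_integral_le_of_norm_le hGint hae
    _ = 8 / q^3 * lam ^ a := hval
end

section
/- Let 4π ≤ β² < 6π, κ = 10⁻³(6π − β²), β̄ = β²/(4π) + κ, let η ∈ (β̄/2 − 1, 0), ν ∈ (β²/(2π) − 2, 1], and set γ = 3 − β²/(2π) − (1−ν)η. Then there exists a constant C (depending only on β, η, ν) such that for every T ∈ (0,1] one has sup over 0 < t ≤ T and x ∈ 𝕋² of t^{(1−η)/2} ∫₀^t ∫_{𝕋²} s^{−(1−η)ν/2} ((t−s)^{1/2} + d(x,y))^{−2 − β²/(2π) + ν} dy ds ≤ C T^{γ/2}. -/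
open MeasureTheory Real
open Set

set_option maxHeartbeats 1000000

/-- The flat two-dimensional torus `(ℝ/ℤ)²`. -/
noncomputable abbrev Torus2 := AddCircle (1 : ℝ) × AddCircle (1 : ℝ)

lemma interval_piece (c q a b' : ℝ) (hc : 0 < c) (hq : 1 < q) (hab : a ≤ b') :
    ∫ x in a..b', (c + (x - a)) ^ (-q) = (c ^ (1-q) - (c + (b' - a)) ^ (1-q)) / (q - 1) := by
  have hne : q - 1 ≠ 0 := by linarith
  have key : ∀ x ∈ Set.uIcc a b', HasDerivAt (fun x => -(c + (x - a)) ^ (1-q) / (q-1))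
      ((c + (x - a)) ^ (-q)) x := by
    intro x hx
    rw [Set.uIcc_of_le hab] at hx
    have hpos : 0 < c + (x - a) := by
      have := hx.1; linarith
    have h1 : HasDerivAt (fun x : ℝ => c + (x - a)) 1 x := by
      simpa using (hasDerivAt_id x).sub_const a |>.const_add c
    have h2 : HasDerivAt (fun y : ℝ => y ^ (1-q)) ((1-q) * (c + (x-a)) ^ (1-q-1)) (c + (x-a)) :=
      Real.hasDerivAt_rpow_const (Or.inl hpos.ne')
    have h3 := h2.comp x h1
    have h4 : HasDerivAt (fun x : ℝ => -(c + (x - a)) ^ (1-q) / (q-1))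
        (-((1-q) * (c + (x-a)) ^ (1-q-1) * 1) / (q-1)) x := (h3.neg).div_const (q-1)
    convert h4 using 1
    have : (1:ℝ) - q - 1 = -q := by ring
    rw [this]
    field_simp
    ring
  have hcont : ContinuousOn (fun x => (c + (x - a)) ^ (-q)) (Set.uIcc a b') := by
    apply ContinuousOn.rpow_const
    · fun_prop
    · intro x hx
      rw [Set.uIcc_of_le hab] at hx
      exact Or.inl (by have := hx.1; linarith)
  have hint : IntervalIntegrable (fun x => (c + (x - a)) ^ (-q)) volume a b' :=
    hcont.intervalIntegrable
  rw [intervalIntegral.integral_eq_sub_of_hasDerivAt key hint]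
  simp only [sub_self, add_zero]
  ring

lemma oneD (c q : ℝ) (hc : 0 < c) (hq : 1 < q) (z : AddCircle (1:ℝ)) :
    ∫ u : AddCircle (1:ℝ), (c + dist z u) ^ (-q) ≤ 2 / (q-1) * c ^ (1-q) := by
  haveI : Fact ((0:ℝ) < 1) := ⟨one_pos⟩
  induction z using QuotientAddGroup.induction_on with
  | _ a =>
  have h1 : (∫ u : AddCircle (1:ℝ), (c + dist (↑a) u) ^ (-q))
      = ∫ x : ℝ in Ioc (a - 2⁻¹) ((a - 2⁻¹) + 1), (c + dist (↑a : AddCircle (1:ℝ)) (↑x : AddCircle (1:ℝ))) ^ (-q) :=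
    (AddCircle.integral_preimage 1 (a - 2⁻¹) _).symm
  rw [h1, show a - 2⁻¹ + 1 = a + 2⁻¹ by ring]
  have hd : ∀ x ∈ Ioc (a - 2⁻¹) (a + 2⁻¹),
      (c + dist (↑a : AddCircle (1:ℝ)) (↑x : AddCircle (1:ℝ))) ^ (-q) = (c + |a - x|) ^ (-q) := by
    intro x hx
    have : dist ((a : AddCircle (1:ℝ))) (x : AddCircle (1:ℝ)) = |a - x| := by
      rw [dist_eq_norm, ← AddCircle.coe_sub]
      refine (AddCircle.norm_coe_eq_abs_iff 1 one_ne_zero).mpr ?_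
      rw [abs_one]
      refine abs_le.mpr ⟨by linarith [hx.2], by linarith [hx.1]⟩
    rw [this]
  rw [setIntegral_congr_fun measurableSet_Ioc hd]
  have hcont : Continuous fun x : ℝ => (c + |a - x|) ^ (-q) := by
    apply Continuous.rpow_const
    · fun_prop
    · intro x
      exact Or.inl (by positivity)
  have hsplit : Ioc (a - 2⁻¹) (a + 2⁻¹) = Ioc (a - 2⁻¹) a ∪ Ioc a (a + 2⁻¹) :=
    (Ioc_union_Ioc_eq_Ioc (by linarith) (by linarith)).symm
  rw [hsplit, setIntegral_union (Ioc_disjoint_Ioc_of_le le_rfl) measurableSet_Ioc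
    (hcont.integrableOn_Ioc) (hcont.integrableOn_Ioc)]
  have hleft : (∫ x in Ioc (a - 2⁻¹) a, (c + |a - x|) ^ (-q))
      = (c ^ (1-q) - (c + 2⁻¹) ^ (1-q)) / (q - 1) := by
    have heq : Set.EqOn (fun x : ℝ => (c + |a - x|) ^ (-q))
        (fun x : ℝ => (c + (a - x)) ^ (-q)) (Ioc (a - 2⁻¹) a) := fun x hx => by
      show (c + |a - x|) ^ (-q) = (c + (a - x)) ^ (-q)
      rw [abs_of_nonneg (by linarith [hx.2] : (0:ℝ) ≤ a - x)]
    rw [setIntegral_congr_fun measurableSet_Ioc heq]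
    rw [← intervalIntegral.integral_of_le (by linarith)]
    have := intervalIntegral.integral_comp_sub_left (a := a - 2⁻¹) (b := a)
      (fun y => (c + y) ^ (-q)) a
    rw [this, show a - a = 0 by ring, show a - (a - 2⁻¹) = 2⁻¹ by ring]
    have := interval_piece c q 0 2⁻¹ hc hq (by norm_num)
    simp only [sub_zero] at this
    rw [this]
  have hright : (∫ x in Ioc a (a + 2⁻¹), (c + |a - x|) ^ (-q))
      = (c ^ (1-q) - (c + 2⁻¹) ^ (1-q)) / (q - 1) := by
    have heq : Set.EqOn (fun x : ℝ => (c + |a - x|) ^ (-q))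
        (fun x : ℝ => (c + (x - a)) ^ (-q)) (Ioc a (a + 2⁻¹)) := fun x hx => by
      show (c + |a - x|) ^ (-q) = (c + (x - a)) ^ (-q)
      rw [abs_of_nonpos (by linarith [hx.1] : a - x ≤ 0), neg_sub]
    rw [setIntegral_congr_fun measurableSet_Ioc heq]
    rw [← intervalIntegral.integral_of_le (by linarith)]
    rw [interval_piece c q a (a + 2⁻¹) hc hq (by linarith), show a + 2⁻¹ - a = 2⁻¹ by ring]
  rw [hleft, hright]
  have h2 : (0:ℝ) ≤ (c + 2⁻¹) ^ (1-q) := rpow_nonneg (by positivity) _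
  have h3 : (0:ℝ) < q - 1 := by linarith
  rw [← add_div, div_le_iff₀ h3, mul_comm (2 / (q-1)), mul_assoc]
  rw [div_mul_cancel₀ _ h3.ne']
  linarith

lemma integrable_of_cont (f : Torus2 → ℝ) (hf : Continuous f) : Integrable f volume := by
  have h : IntegrableOn f univ volume :=
    hf.continuousOn.integrableOn_compact (isCompact_univ (X := Torus2))
  rwa [integrableOn_univ] at h


lemma spatial (c q : ℝ) (hc : 0 < c) (hq : 1 < q) (x : Torus2) :
    ∫ y : Torus2, (c + dist x y) ^ (-(2*q)) ≤ (2/(q-1))^2 * c ^ (2 - 2*q) := by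
  set g₁ : AddCircle (1:ℝ) → ℝ := fun u => (c + dist x.1 u) ^ (-q) with hg₁
  set g₂ : AddCircle (1:ℝ) → ℝ := fun u => (c + dist x.2 u) ^ (-q) with hg₂
  have hcont₁ : Continuous g₁ := by
    apply Continuous.rpow_const (by fun_prop)
    intro u; exact Or.inl (by positivity)
  have hcont₂ : Continuous g₂ := by
    apply Continuous.rpow_const (by fun_prop)
    intro u; exact Or.inl (by positivity)
  have hint : Integrable (fun y : Torus2 => g₁ y.1 * g₂ y.2) volume :=
    integrable_of_cont _ ((hcont₁.comp continuous_fst).mul (hcont₂.comp continuous_snd))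
  have hpt : ∀ y : Torus2, (c + dist x y) ^ (-(2*q)) ≤ g₁ y.1 * g₂ y.2 := by
    intro y
    have hd : dist x y = max (dist x.1 y.1) (dist x.2 y.2) := Prod.dist_eq
    have hA : (0:ℝ) < c + dist x y := by positivity
    have e1 : (c + dist x y) ^ (-(2*q)) = (c + dist x y) ^ (-q) * (c + dist x y) ^ (-q) := by
      rw [← Real.rpow_add hA]; ring_nf
    rw [e1]
    have h₁ : (c + dist x y) ^ (-q) ≤ g₁ y.1 := by
      apply Real.rpow_le_rpow_of_nonpos (by positivity) _ (by linarith)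
      rw [hd]; gcongr; exact le_max_left _ _
    have h₂ : (c + dist x y) ^ (-q) ≤ g₂ y.2 := by
      apply Real.rpow_le_rpow_of_nonpos (by positivity) _ (by linarith)
      rw [hd]; gcongr; exact le_max_right _ _
    exact mul_le_mul h₁ h₂ (Real.rpow_nonneg hA.le _) (Real.rpow_nonneg (by positivity) _)
  have step1 : ∫ y : Torus2, (c + dist x y) ^ (-(2*q))
      ≤ ∫ y : Torus2, g₁ y.1 * g₂ y.2 :=
    integral_mono_of_nonneg (Filter.Eventually.of_forall fun y => by positivity) hint
      (Filter.Eventually.of_forall hpt)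
  have step2 : (∫ y : Torus2, g₁ y.1 * g₂ y.2) = (∫ u, g₁ u) * ∫ u, g₂ u := by
    rw [MeasureTheory.Measure.volume_eq_prod, MeasureTheory.integral_prod_mul]
  have hb₁ := oneD c q hc hq x.1
  have hb₂ := oneD c q hc hq x.2
  have hnn₁ : 0 ≤ ∫ u, g₁ u := integral_nonneg fun u => by positivity
  have step3 : (∫ u, g₁ u) * (∫ u, g₂ u) ≤ (2/(q-1) * c ^ (1-q)) * (2/(q-1) * c ^ (1-q)) := by
    have hq1 : (0:ℝ) < q - 1 := by linarith
    have : 0 ≤ 2/(q-1) * c ^ (1-q) := by positivity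
    exact mul_le_mul hb₁ hb₂ (integral_nonneg fun u => by positivity) this
  calc ∫ y : Torus2, (c + dist x y) ^ (-(2*q)) ≤ (∫ u, g₁ u) * ∫ u, g₂ u := step2 ▸ step1
    _ ≤ (2/(q-1) * c ^ (1-q)) * (2/(q-1) * c ^ (1-q)) := step3
    _ = (2/(q-1))^2 * c ^ (2 - 2*q) := by
        rw [show (2:ℝ)/(q-1) * c^(1-q) * (2/(q-1) * c^(1-q))
            = (2/(q-1))^2 * (c^(1-q) * c^(1-q)) by ring,
          ← Real.rpow_add hc, show (1-q)+(1-q) = 2-2*q by ring]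

/-- Weighted space-time kernel estimate on the torus: with `4π ≤ β² < 6π`, suitable
`κ, β̄, η, ν` and `γ = 3 − β²/(2π) − (1−ν)η`, there is a constant `C` such that for all
`T ∈ (0,1]`, all `0 < t ≤ T` and all `x ∈ 𝕋²`,
`t^{(1−η)/2} ∫₀ᵗ ∫_{𝕋²} s^{−(1−η)ν/2} ((t−s)^{1/2} + d(x,y))^{−2−β²/(2π)+ν} dy ds ≤ C T^{γ/2}`. -/
theorem weighted_spacetime_kernel_estimate (β κ βbar η ν γ : ℝ)
    (hβl : 4 * π ≤ β ^ 2) (hβu : β ^ 2 < 6 * π)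
    (hκ : κ = (10 : ℝ) ^ (-3 : ℤ) * (6 * π - β ^ 2))
    (hβbar : βbar = β ^ 2 / (4 * π) + κ)
    (hη : η ∈ Set.Ioo (βbar / 2 - 1) 0)
    (hν : ν ∈ Set.Ioc (β ^ 2 / (2 * π) - 2) 1)
    (hγ : γ = 3 - β ^ 2 / (2 * π) - (1 - ν) * η) :
    ∃ C : ℝ, ∀ T ∈ Set.Ioc (0 : ℝ) 1, ∀ t ∈ Set.Ioc (0 : ℝ) T, ∀ x : Torus2,
      t ^ ((1 - η)/2) *
        ∫ s in Set.Ioo (0 : ℝ) t, ∫ y : Torus2,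
          s ^ (-((1 - η) * ν / 2)) *
            ((t - s) ^ ((1 : ℝ)/2) + dist x y) ^ (-2 - β ^ 2 / (2 * π) + ν)
      ≤ C * T ^ (γ/2) := by
  have hπ : (0:ℝ) < π := Real.pi_pos
  obtain ⟨hη1, hη0⟩ := hη
  obtain ⟨hν1, hν2⟩ := hν
  have hr2 : 2 ≤ β^2/(2*π) := by rw [le_div_iff₀ (by positivity)]; linarith
  have hr3 : β^2/(2*π) < 3 := by rw [div_lt_iff₀ (by positivity)]; linarith
  have hν0 : 0 < ν := by linarith
  have hκ0 : 0 < κ := by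
    have h6 : (0:ℝ) < 6*π - β^2 := by linarith
    rw [hκ]; positivity
  have hβbar1 : 1 ≤ βbar := by
    rw [hβbar]
    have : 1 ≤ β^2/(4*π) := by rw [le_div_iff₀ (by positivity)]; linarith
    linarith
  have hηm1 : -1 < η := by linarith
  have h1mη : 0 < 1 - η := by linarith
  set A := (1 - η) * ν / 2 with hA
  set B := (β^2/(2*π) - ν)/2 with hB
  have hA0 : 0 < A := by
    have := mul_pos h1mη hν0; rw [hA]; linarith
  have hA1 : A < 1 := by
    have h := mul_le_mul_of_nonneg_left hν2 h1mη.le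
    rw [hA]; nlinarith
  have hB0 : 0 < B := by rw [hB]; linarith
  have hB1 : B < 1 := by rw [hB]; linarith
  set q := 1 + B with hqdef
  have hq1 : 1 < q := by rw [hqdef]; linarith
  have hγ2 : γ/2 = (1-η)/2 + (1 - A - B) := by rw [hγ, hA, hB]; ring
  have hγpos : 0 < γ := by
    rw [hγ]
    nlinarith [mul_nonneg (by linarith : (0:ℝ) ≤ 1-ν) (by linarith : (0:ℝ) ≤ -η)]
  set K := (2/(q-1))^2 with hK
  have hK0 : (0:ℝ) ≤ K := sq_nonneg _
  set C := K * (2^B/(1-A) + 2^A/(1-B)) with hC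
  have hC0 : 0 ≤ C := by
    refine mul_nonneg hK0 (add_nonneg ?_ ?_)
    · exact div_nonneg (rpow_nonneg (by norm_num) _) (by linarith)
    · exact div_nonneg (rpow_nonneg (by norm_num) _) (by linarith)
  refine ⟨C, ?_⟩
  rintro T ⟨hT0, hT1⟩ t ⟨ht0, htT⟩ x
  have hexpq : -2 - β^2/(2*π) + ν = -(2*q) := by rw [hqdef, hB]; ring
  simp only [hexpq]
  set H : ℝ → ℝ := fun s => K * (s^(-A) * (t/2)^(-B) + (t/2)^(-A) * (t-s)^(-B)) with hH
  have hmemae := ae_restrict_mem (μ := volume) (measurableSet_Ioo (a := (0:ℝ)) (b := t))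
  have ht2 : 0 < t/2 := by linarith
  -- nonnegativity of inner integral
  have hG0 : (0 : ℝ → ℝ) ≤ᵐ[volume.restrict (Ioo 0 t)]
      fun s => ∫ y : Torus2, s ^ (-A) * ((t - s) ^ ((1:ℝ)/2) + dist x y) ^ (-(2*q)) := by
    refine hmemae.mono fun s hs => integral_nonneg fun y => ?_
    refine mul_nonneg (rpow_nonneg hs.1.le _) (rpow_nonneg ?_ _)
    exact add_nonneg (rpow_nonneg (by linarith [hs.2] : (0:ℝ) ≤ t - s) _) dist_nonneg
  -- pointwise bound by H
  have hGH : (fun s => ∫ y : Torus2, s ^ (-A) * ((t - s) ^ ((1:ℝ)/2) + dist x y) ^ (-(2*q)))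
      ≤ᵐ[volume.restrict (Ioo 0 t)] H := by
    refine hmemae.mono fun s hs => ?_
    have hts : 0 < t - s := by linarith [hs.2]
    have hc : 0 < (t-s) ^ ((1:ℝ)/2) := Real.rpow_pos_of_pos hts _
    have hs0 : 0 < s := hs.1
    calc (∫ y : Torus2, s ^ (-A) * ((t - s) ^ ((1:ℝ)/2) + dist x y) ^ (-(2*q)))
        = s ^ (-A) * ∫ y : Torus2, ((t - s) ^ ((1:ℝ)/2) + dist x y) ^ (-(2*q)) :=
          integral_const_mul _ _
      _ ≤ s ^ (-A) * (K * ((t-s)^((1:ℝ)/2)) ^ (2 - 2*q)) :=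
          mul_le_mul_of_nonneg_left (spatial _ _ hc hq1 x) (rpow_nonneg hs0.le _)
      _ = K * (s^(-A) * (t-s)^(-B)) := by
          rw [← Real.rpow_mul hts.le, show (1:ℝ)/2*(2-2*q) = -B by rw [hqdef]; ring]
          ring
      _ ≤ H s := by
          rcases le_or_gt s (t/2) with hs2 | hs2
          · have h1 : (t-s)^(-B) ≤ (t/2)^(-B) :=
              Real.rpow_le_rpow_of_nonpos ht2 (by linarith) (by linarith)
            have h2 : 0 ≤ (t/2)^(-A) * (t-s)^(-B) :=
              mul_nonneg (rpow_nonneg ht2.le _) (rpow_nonneg hts.le _)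
            have h3 : s^(-A) * (t-s)^(-B) ≤ s^(-A) * (t/2)^(-B) :=
              mul_le_mul_of_nonneg_left h1 (rpow_nonneg hs0.le _)
            exact mul_le_mul_of_nonneg_left (by linarith) hK0
          · have h1 : s^(-A) ≤ (t/2)^(-A) :=
              Real.rpow_le_rpow_of_nonpos ht2 hs2.le (by linarith)
            have h2 : 0 ≤ s^(-A) * (t/2)^(-B) :=
              mul_nonneg (rpow_nonneg hs0.le _) (rpow_nonneg ht2.le _)
            have h3 : s^(-A) * (t-s)^(-B) ≤ (t/2)^(-A) * (t-s)^(-B) :=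
              mul_le_mul_of_nonneg_right h1 (rpow_nonneg hts.le _)
            exact mul_le_mul_of_nonneg_left (by linarith) hK0
  -- integrability of H
  have i1 : IntegrableOn (fun s : ℝ => s ^ (-A)) (Ioo 0 t) volume := by
    have h := intervalIntegral.intervalIntegrable_rpow' (a := 0) (b := t)
      (by linarith : (-1:ℝ) < -A)
    rw [intervalIntegrable_iff_integrableOn_Ioo_of_le ht0.le] at h
    exact h
  have i2 : IntegrableOn (fun s : ℝ => (t - s) ^ (-B)) (Ioo 0 t) volume := by
    have h := intervalIntegral.intervalIntegrable_rpow' (a := 0) (b := t)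
      (by linarith : (-1:ℝ) < -B)
    have h2 := (h.comp_sub_left t).symm
    rw [sub_zero, sub_self] at h2
    rw [intervalIntegrable_iff_integrableOn_Ioo_of_le ht0.le] at h2
    exact h2
  have i1' : IntegrableOn (fun s : ℝ => s^(-A) * (t/2)^(-B)) (Ioo 0 t) volume :=
    i1.mul_const _
  have i2' : IntegrableOn (fun s : ℝ => (t/2)^(-A) * (t-s)^(-B)) (Ioo 0 t) volume :=
    i2.const_mul _
  have hHint : IntegrableOn H (Ioo 0 t) volume := (i1'.add i2').const_mul _
  -- value of ∫ H
  have J1 : ∫ s in Ioo (0:ℝ) t, s ^ (-A) = t^(1-A)/(1-A) := by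
    rw [← integral_Ioc_eq_integral_Ioo, ← intervalIntegral.integral_of_le ht0.le,
      integral_rpow (Or.inl (by linarith : (-1:ℝ) < -A)),
      Real.zero_rpow (by linarith : -A + 1 ≠ 0)]
    rw [show -A + 1 = 1 - A by ring]
    ring
  have J2 : ∫ s in Ioo (0:ℝ) t, (t - s) ^ (-B) = t^(1-B)/(1-B) := by
    rw [← integral_Ioc_eq_integral_Ioo, ← intervalIntegral.integral_of_le ht0.le,
      intervalIntegral.integral_comp_sub_left (fun y => y ^ (-B)) t,
      sub_zero, sub_self,
      integral_rpow (Or.inl (by linarith : (-1:ℝ) < -B)),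
      Real.zero_rpow (by linarith : -B + 1 ≠ 0)]
    rw [show -B + 1 = 1 - B by ring]
    ring
  have hI : ∫ s in Ioo (0:ℝ) t, H s
      = K * ((t^(1-A)/(1-A)) * (t/2)^(-B) + (t/2)^(-A) * (t^(1-B)/(1-B))) := by
    rw [hH]
    rw [MeasureTheory.integral_const_mul]
    rw [integral_add i1' i2']
    rw [MeasureTheory.integral_mul_const, MeasureTheory.integral_const_mul, J1, J2]
  -- rpow algebra
  have key : ∀ w v : ℝ, w + v = A + B →
      t ^ ((1-η)/2) * ((t ^ (1-v) / (1-v)) * (t/2) ^ (-w)) = 2^w / (1-v) * t^(γ/2) := by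
    intro w v hwv
    have h2 : ((t:ℝ)/2) ^ (-w) = 2 ^ w * t ^ (-w) := by
      rw [Real.div_rpow ht0.le (by norm_num : (0:ℝ) ≤ 2),
        Real.rpow_neg (by norm_num : (0:ℝ) ≤ 2), div_inv_eq_mul, mul_comm]
    rw [h2, show t ^ ((1-η)/2) * ((t ^ (1-v) / (1-v)) * (2 ^ w * t ^ (-w)))
        = 2^w/(1-v) * (t ^ ((1-η)/2) * t^(-w) * t^(1-v)) from by ring,
      ← Real.rpow_add ht0, ← Real.rpow_add ht0,
      show (1-η)/2 + -w + (1-v) = γ/2 from by rw [hγ2]; linarith]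
  have e1 := key B A (by ring)
  have e2 := key A B (by ring)
  calc t ^ ((1 - η)/2) *
        ∫ s in Ioo (0:ℝ) t, ∫ y : Torus2,
          s ^ (-A) * ((t - s) ^ ((1:ℝ)/2) + dist x y) ^ (-(2*q))
      ≤ t ^ ((1 - η)/2) * ∫ s in Ioo (0:ℝ) t, H s :=
        mul_le_mul_of_nonneg_left (integral_mono_of_nonneg hG0 hHint hGH)
          (rpow_nonneg ht0.le _)
    _ = K * (t ^ ((1-η)/2) * ((t^(1-A)/(1-A)) * (t/2)^(-B)))
        + K * (t ^ ((1-η)/2) * ((t^(1-B)/(1-B)) * (t/2)^(-A))) := by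
        rw [hI]; ring
    _ = C * t^(γ/2) := by rw [e1, e2, hC]; ring
    _ ≤ C * T^(γ/2) :=
        mul_le_mul_of_nonneg_left
          (Real.rpow_le_rpow ht0.le htT (by linarith)) hC0
end
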